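/- For k ∈ ℤ, k ≠ 0, let f_k(x) := ((1+ix)/(1−ix))^k (the function z^k on the circle under the stereographic identification), and let g_k := f_k − f_k(∞) = f_k − (−1)^k. Then the Fourier transform of g_k is supported in ℝ₊ if k > 0 and in ℝ₋ if k < 0; equivalently, ĝ_k(p) = 0 for sign(k)·p < 0. -/

import Mathlib

open Filter Topology intervalIntegral Complex Set

lemma pow_sub_one_norm (n : ℕ) (u : ℂ) (hu : ‖u‖ ≤ 1) : ‖u ^ n - 1‖ ≤ n * ‖u - 1‖ := by
  induction n with
  | zero => simp
  | succ n ih =>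
    have : u ^ (n+1) - 1 = u * (u ^ n - 1) + (u - 1) := by ring
    rw [this]
    calc ‖u * (u ^ n - 1) + (u - 1)‖ ≤ ‖u * (u ^ n - 1)‖ + ‖u - 1‖ := norm_add_le _ _
      _ ≤ ‖u ^ n - 1‖ + ‖u - 1‖ := by
          rw [norm_mul]
          nlinarith [norm_nonneg (u ^ n - 1), norm_nonneg (u-1)]
      _ ≤ n * ‖u - 1‖ + ‖u - 1‖ := by linarith
      _ = (n+1 : ℕ) * ‖u - 1‖ := by push_cast; ring

lemma gk_bound (n : ℕ) (z : ℂ) (hz : 0 ≤ z.im) :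
    ‖((1 + Complex.I * z) / (1 - Complex.I * z)) ^ n - (-1 : ℂ) ^ n‖ ≤ 2 * n / ‖z + Complex.I‖ := by
  have hzi : z + Complex.I ≠ 0 := by
    intro h
    have := congrArg Complex.im h
    simp at this; linarith
  have e1 : (1 : ℂ) + Complex.I * z = Complex.I * (z - Complex.I) := by
    rw [mul_sub, Complex.I_mul_I]; ring
  have e2 : (1 : ℂ) - Complex.I * z = -Complex.I * (z + Complex.I) := by
    rw [neg_mul, mul_add, Complex.I_mul_I]; ring
  have hratio : (1 + Complex.I * z) / (1 - Complex.I * z)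
      = -((z - Complex.I) / (z + Complex.I)) := by
    rw [e1, e2]
    field_simp
  set u : ℂ := (z - Complex.I) / (z + Complex.I) with hu
  have hnormle : ‖z - Complex.I‖ ≤ ‖z + Complex.I‖ := by
    rw [← Real.sqrt_sq (norm_nonneg (z - Complex.I)), ← Real.sqrt_sq (norm_nonneg (z + Complex.I))]
    apply Real.sqrt_le_sqrt
    rw [Complex.sq_norm, Complex.sq_norm]
    simp [Complex.normSq_apply]
    nlinarith
  have hule : ‖u‖ ≤ 1 := by
    rw [hu, norm_div, div_le_one (norm_pos_iff.mpr hzi)]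
    exact hnormle
  have hu1 : ‖u - 1‖ = 2 / ‖z + Complex.I‖ := by
    have : u - 1 = (-2 * Complex.I) / (z + Complex.I) := by
      rw [hu]; field_simp; ring
    rw [this, norm_div]
    norm_num
  have key : ((1 + Complex.I * z) / (1 - Complex.I * z)) ^ n - (-1 : ℂ) ^ n
      = (-1 : ℂ) ^ n * (u ^ n - 1) := by
    rw [hratio, neg_eq_neg_one_mul u, mul_pow]; ring
  rw [key, norm_mul, norm_pow, norm_neg, norm_one, one_pow, one_mul]
  calc ‖u ^ n - 1‖ ≤ n * ‖u - 1‖ := pow_sub_one_norm n u hule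
    _ = 2 * n / ‖z + Complex.I‖ := by rw [hu1]; ring

lemma rect_id (n : ℕ) (q : ℝ) (R : ℝ) (hR : 1 ≤ R) :
    (∫ x in (-R)..R, ((((1 + Complex.I * x) / (1 - Complex.I * x)) ^ n - (-1:ℂ) ^ n)
        * Complex.exp (Complex.I * q * x)))
    = (∫ x : ℝ in (-R)..R,
        ((((1 + Complex.I * (x + R * Complex.I)) / (1 - Complex.I * (x + R * Complex.I))) ^ n - (-1:ℂ) ^ n)
        * Complex.exp (Complex.I * q * (x + R * Complex.I))))
      - Complex.I • (∫ y : ℝ in (0:ℝ)..R,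
        ((((1 + Complex.I * (R + y * Complex.I)) / (1 - Complex.I * (R + y * Complex.I))) ^ n - (-1:ℂ) ^ n)
        * Complex.exp (Complex.I * q * (R + y * Complex.I))))
      + Complex.I • (∫ y : ℝ in (0:ℝ)..R,
        ((((1 + Complex.I * (-R + y * Complex.I)) / (1 - Complex.I * (-R + y * Complex.I))) ^ n - (-1:ℂ) ^ n)
        * Complex.exp (Complex.I * q * (-R + y * Complex.I)))) := by
  set f : ℂ → ℂ := fun z => (((1 + Complex.I * z) / (1 - Complex.I * z)) ^ n - (-1:ℂ) ^ n)
        * Complex.exp (Complex.I * q * z) with hf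
  have hdiff : DifferentiableOn ℂ f
      (uIcc ((-R : ℂ)).re (((R : ℂ) + R * Complex.I).re) ×ℂ
        uIcc ((-R : ℂ)).im (((R : ℂ) + R * Complex.I).im)) := by
    intro z hz
    apply DifferentiableAt.differentiableWithinAt
    have him : 0 ≤ z.im := by
      have h2 := hz.2
      simp only [Complex.neg_im, Complex.ofReal_im, Complex.add_im, Complex.mul_im,
        Complex.ofReal_re, Complex.I_im, Complex.I_re, mul_zero, mul_one, zero_mul,
        neg_zero, zero_add, add_zero] at h2
      rw [uIcc_of_le (by linarith)] at h2
      exact h2.1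
    have hden : (1 : ℂ) - Complex.I * z ≠ 0 := by
      intro h
      have h2 : z = -Complex.I := by
        have : Complex.I * z = 1 := by linear_combination -h
        calc z = -Complex.I * (Complex.I * z) := by
                rw [← mul_assoc, neg_mul, Complex.I_mul_I]; ring
          _ = -Complex.I := by rw [this, mul_one]
      rw [h2] at him
      simp only [Complex.neg_im, Complex.I_im] at him
      linarith
    apply DifferentiableAt.mul
    · have h1 : DifferentiableAt ℂ (fun w : ℂ => 1 + Complex.I * w) z := by fun_prop
      have h2 : DifferentiableAt ℂ (fun w : ℂ => 1 - Complex.I * w) z := by fun_prop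
      exact ((h1.div h2 hden).pow n).sub (differentiableAt_const _)
    · exact ((differentiableAt_const _).mul differentiableAt_id).cexp
  have H := Complex.integral_boundary_rect_eq_zero_of_differentiableOn f (-R) ((R : ℂ) + R * Complex.I) hdiff
  simp only [Complex.neg_re, Complex.ofReal_re, Complex.add_re, Complex.mul_re, Complex.I_re,
    Complex.I_im, Complex.ofReal_im, Complex.neg_im, Complex.add_im, Complex.mul_im,
    mul_zero, mul_one, zero_mul, neg_zero, zero_add, add_zero, sub_zero, zero_sub,
    Complex.ofReal_zero, Complex.ofReal_neg] at H
  simp only [hf] at H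
  linear_combination H

lemma int_exp_aux (q R : ℝ) (hq : 0 < q) :
    ∫ y in (0:ℝ)..R, Real.exp (-q*y) = (1 - Real.exp (-q*R))/q := by
  rw [intervalIntegral.integral_comp_mul_left Real.exp (show -q ≠ 0 by linarith)]
  rw [integral_exp]
  simp only [mul_zero, Real.exp_zero, smul_eq_mul]
  field_simp
  ring

lemma exp_norm_aux (q : ℝ) (z : ℂ) : ‖Complex.exp (Complex.I * q * z)‖ = Real.exp (-(q * z.im)) := by
  rw [Complex.norm_exp]
  congr 1
  simp [Complex.mul_re, Complex.mul_im]


lemma ptwise (n : ℕ) (q R : ℝ) (hR : 0 < R) (z : ℂ) (him : 0 ≤ z.im)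
    (hz : R ≤ ‖z + Complex.I‖) :
    ‖(((1 + Complex.I * z) / (1 - Complex.I * z)) ^ n - (-1:ℂ) ^ n)
        * Complex.exp (Complex.I * q * z)‖
      ≤ (2*n/R) * Real.exp (-(q*z.im)) := by
  rw [norm_mul, exp_norm_aux]
  apply mul_le_mul_of_nonneg_right _ (Real.exp_nonneg _)
  calc ‖((1 + Complex.I * z) / (1 - Complex.I * z)) ^ n - (-1:ℂ) ^ n‖
      ≤ 2 * n / ‖z + Complex.I‖ := gk_bound n z him
    _ ≤ 2 * n / R := by
        apply div_le_div_of_nonneg_left _ hR hz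
        positivity


lemma core (n : ℕ) (q : ℝ) (hq : 0 < q) :
    Tendsto (fun R : ℝ => ∫ x in (-R)..R,
      (((1 + Complex.I * x) / (1 - Complex.I * x)) ^ n - (-1:ℂ) ^ n)
        * Complex.exp (Complex.I * q * x)) atTop (𝓝 0) := by
  apply squeeze_zero_norm'
    (a := fun R : ℝ => 4*n*Real.exp (-(q*R)) + (2*n/q/R + 2*n/q/R))
  · filter_upwards [eventually_ge_atTop 1] with R hR
    have hR0 : (0:ℝ) < R := by linarith
    rw [rect_id n q R hR]
    have htop : ‖∫ x : ℝ in (-R)..R,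
        ((((1 + Complex.I * ((x:ℂ) + R * Complex.I)) / (1 - Complex.I * ((x:ℂ) + R * Complex.I))) ^ n - (-1:ℂ) ^ n)
        * Complex.exp (Complex.I * q * ((x:ℂ) + R * Complex.I)))‖
        ≤ 4*n*Real.exp (-(q*R)) := by
      have h1 : ‖∫ x : ℝ in (-R)..R,
          ((((1 + Complex.I * ((x:ℂ) + R * Complex.I)) / (1 - Complex.I * ((x:ℂ) + R * Complex.I))) ^ n - (-1:ℂ) ^ n)
          * Complex.exp (Complex.I * q * ((x:ℂ) + R * Complex.I)))‖
          ≤ (2*n/R) * Real.exp (-(q*R)) * |R - -R| := by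
        apply intervalIntegral.norm_integral_le_of_norm_le_const
        intro x hx
        have him : ((x:ℂ) + R * Complex.I).im = R := by simp
        have habs : R ≤ ‖(x:ℂ) + R * Complex.I + Complex.I‖ := by
          have h2 := Complex.abs_im_le_norm ((x:ℂ) + R * Complex.I + Complex.I)
          have h3 : ((x:ℂ) + R * Complex.I + Complex.I).im = R + 1 := by simp
          rw [h3, abs_of_pos (by linarith)] at h2
          linarith
        have := ptwise n q R hR0 ((x:ℂ) + R * Complex.I) (by rw [him]; linarith) habs
        rw [him] at this
        exact this
      have h2 : |R - -R| = 2*R := by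
        rw [sub_neg_eq_add, abs_of_pos (by linarith)]
        ring
      rw [h2] at h1
      calc _ ≤ (2*↑n/R) * Real.exp (-(q*R)) * (2*R) := h1
        _ = 4*↑n*Real.exp (-(q*R)) := by field_simp; ring
    have hside : ∀ s : ℝ, |s| = R → ‖∫ y : ℝ in (0:ℝ)..R,
        ((((1 + Complex.I * ((s:ℂ) + y * Complex.I)) / (1 - Complex.I * ((s:ℂ) + y * Complex.I))) ^ n - (-1:ℂ) ^ n)
        * Complex.exp (Complex.I * q * ((s:ℂ) + y * Complex.I)))‖ ≤ 2*n/q/R := by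
      intro s hs
      have key : ‖∫ y : ℝ in (0:ℝ)..R,
          ((((1 + Complex.I * ((s:ℂ) + y * Complex.I)) / (1 - Complex.I * ((s:ℂ) + y * Complex.I))) ^ n - (-1:ℂ) ^ n)
          * Complex.exp (Complex.I * q * ((s:ℂ) + y * Complex.I)))‖
          ≤ |∫ y in (0:ℝ)..R, (2*(n:ℝ)/R) * Real.exp (-q*y)| := by
        refine intervalIntegral.norm_integral_le_abs_of_norm_le ?_ ?_
        · rw [Set.uIoc_of_le (by linarith : (0:ℝ) ≤ R)]
          refine (MeasureTheory.ae_restrict_iff' measurableSet_Ioc).mpr (Filter.Eventually.of_forall ?_)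
          intro y hy
          have him : ((s:ℂ) + y * Complex.I).im = y := by simp
          have habs : R ≤ ‖(s:ℂ) + y * Complex.I + Complex.I‖ := by
            have h2 := Complex.abs_re_le_norm ((s:ℂ) + y * Complex.I + Complex.I)
            have h3 : ((s:ℂ) + y * Complex.I + Complex.I).re = s := by simp
            rw [h3, hs] at h2
            linarith
          have := ptwise n q R hR0 ((s:ℂ) + y * Complex.I) (by rw [him]; exact hy.1.le) habs
          rw [him] at this
          simpa [neg_mul] using this
        · have hc : Continuous fun y : ℝ => (2*(n:ℝ)/R) * Real.exp (-q*y) := by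
            fun_prop
          exact hc.intervalIntegrable 0 R
      have hcomp : ∫ y in (0:ℝ)..R, (2*(n:ℝ)/R) * Real.exp (-q*y)
          = (2*(n:ℝ)/R) * ((1 - Real.exp (-q*R))/q) := by
        rw [intervalIntegral.integral_const_mul, int_exp_aux q R hq]
      have he0 : 0 ≤ Real.exp (-q*R) := Real.exp_nonneg _
      have he1 : Real.exp (-q*R) ≤ 1 := by
        rw [Real.exp_le_one_iff]
        nlinarith
      have hle : (2*(n:ℝ)/R) * ((1 - Real.exp (-q*R))/q) ≤ 2*n/q/R := by
        have e1 : (2*(n:ℝ)/R) * ((1 - Real.exp (-q*R))/q)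
            = (2*n*(1 - Real.exp (-q*R)))/(q*R) := by ring
        have e2 : 2*(n:ℝ)/q/R = (2*n)/(q*R) := by ring
        rw [e1, e2, div_le_div_iff₀ (by positivity) (by positivity)]
        have hprod : 0 ≤ 2*(n:ℝ)*Real.exp (-q*R)*(q*R) := by positivity
        nlinarith [hprod]
      calc _ ≤ |∫ y in (0:ℝ)..R, (2*(n:ℝ)/R) * Real.exp (-q*y)| := key
        _ = (2*(n:ℝ)/R) * ((1 - Real.exp (-q*R))/q) := by
            rw [hcomp]
            exact abs_of_nonneg (mul_nonneg (by positivity) (div_nonneg (by linarith) hq.le))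
        _ ≤ 2*↑n/q/R := hle
    have h3 := hside R (abs_of_pos hR0)
    have h4 := hside (-R) (by rw [abs_neg]; exact abs_of_pos hR0)
    simp only [Complex.ofReal_neg] at h4
    refine le_trans (norm_add_le _ _) ?_
    refine le_trans (add_le_add (norm_sub_le _ _) le_rfl) ?_
    simp only [norm_smul, Complex.norm_I, one_mul]
    linarith [htop, h3, h4]
  · have hq' : Tendsto (fun R : ℝ => q*R) atTop atTop :=
      Tendsto.const_mul_atTop hq tendsto_id
    have t1 : Tendsto (fun R : ℝ => Real.exp (-(q*R))) atTop (𝓝 0) :=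
      Real.tendsto_exp_atBot.comp (tendsto_neg_atTop_atBot.comp hq')
    have t2 : Tendsto (fun R : ℝ => 2*(n:ℝ)/q/R) atTop (𝓝 0) :=
      Tendsto.div_atTop tendsto_const_nhds tendsto_id
    have := (t1.const_mul (4*(n:ℝ))).add (t2.add t2)
    simpa using this

lemma ii_conj (f : ℝ → ℂ) (a b : ℝ) :
    ∫ x in a..b, (starRingEnd ℂ) (f x) = (starRingEnd ℂ) (∫ x in a..b, f x) := by
  rw [intervalIntegral, intervalIntegral, integral_conj, integral_conj, map_sub]

/-- For `k ∈ ℤ`, `k ≠ 0`, `f_k(x) = ((1+ix)/(1−ix))^k` and `g_k = f_k − (−1)^k`,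
the Fourier transform of `g_k` (convention `ĝ(p) = c ∫ g(x) e^{-ipx} dx`) vanishes
for `sign(k)·p < 0`: the improper integral `∫_{-R}^{R} g_k(x) e^{-ipx} dx` tends
to `0` as `R → ∞`. -/
theorem stmt14 (k : ℤ) (hk : k ≠ 0) (p : ℝ) (hp : (Int.sign k : ℝ) * p < 0) :
    Tendsto (fun R : ℝ => ∫ x in (-R)..R,
        (((1 + Complex.I * x) / (1 - Complex.I * x)) ^ k - (-1 : ℂ) ^ k)
          * Complex.exp (-(Complex.I * p * x)))
      atTop (𝓝 0) := by
  rcases hk.lt_or_gt with hkneg | hkpos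
  · -- k < 0, so sign k = -1 and p > 0
    have hs : Int.sign k = -1 := Int.sign_eq_neg_one_of_neg hkneg
    rw [hs] at hp
    have hq : 0 < p := by push_cast at hp; linarith
    set n : ℕ := (-k).toNat with hn
    have hkn : k = -(n : ℤ) := by
      rw [hn, Int.toNat_of_nonneg (by linarith : (0:ℤ) ≤ -k)]; ring
    have hcore := core n p hq
    have h2 := ((Complex.continuous_conj.tendsto 0).comp hcore)
    simp only [Function.comp_def, map_zero] at h2
    refine h2.congr fun R => ?_
    rw [← ii_conj]
    refine intervalIntegral.integral_congr fun x _ => ?_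
    have hb1 : (1 : ℂ) + Complex.I * x ≠ 0 := fun h => by simpa using congrArg Complex.re h
    set b : ℂ := (1 + Complex.I * x) / (1 - Complex.I * x) with hbdef
    have hbconj : (starRingEnd ℂ) b = b⁻¹ := by
      rw [hbdef, map_div₀, inv_div]
      congr 1 <;> simp [map_add, map_sub, map_mul, Complex.conj_I, Complex.conj_ofReal, sub_eq_add_neg]
    have e_pow : b ^ k = (starRingEnd ℂ) (b ^ n) := by
      rw [map_pow, hbconj, hkn, zpow_neg, zpow_natCast, inv_pow]
    have e_neg : ((-1 : ℂ)) ^ k = (starRingEnd ℂ) ((-1 : ℂ) ^ n) := by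
      rw [map_pow, map_neg, map_one, hkn, zpow_neg, zpow_natCast, ← inv_pow, inv_neg, inv_one]
    have e_exp : Complex.exp (-(Complex.I * p * x))
        = (starRingEnd ℂ) (Complex.exp (Complex.I * p * x)) := by
      rw [← Complex.exp_conj]
      congr 1
      simp only [map_mul, Complex.conj_I, Complex.conj_ofReal]
      ring
    rw [e_pow, e_neg, e_exp, ← map_sub, ← map_mul]
  · -- k > 0, so sign k = 1 and p < 0
    have hs : Int.sign k = 1 := Int.sign_eq_one_of_pos hkpos
    rw [hs] at hp
    have hq : 0 < -p := by push_cast at hp; linarith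
    set n : ℕ := k.toNat with hn
    have hkn : k = (n : ℤ) := by rw [hn, Int.toNat_of_nonneg hkpos.le]
    have hcore := core n (-p) hq
    refine hcore.congr fun R => ?_
    refine intervalIntegral.integral_congr fun x _ => ?_
    have e_pow : ((1 + Complex.I * x) / (1 - Complex.I * x)) ^ (n:ℕ)
        = ((1 + Complex.I * x) / (1 - Complex.I * x)) ^ k := by
      rw [hkn, zpow_natCast]
    have e_neg : ((-1 : ℂ)) ^ (n:ℕ) = ((-1 : ℂ)) ^ k := by
      rw [hkn, zpow_natCast]
    have e_exp : Complex.exp (Complex.I * (-p : ℝ) * x)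
        = Complex.exp (-(Complex.I * p * x)) := by
      congr 1
      push_cast
      ring
    rw [e_pow, e_neg, e_exp]
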